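/- Let H = H₁ ⊕ H₂, V₁ the graph of a bounded operator A₁ : H₁ → H₂, and V₂ the swapped graph of a bounded operator A₂ : H₂ → H₁. If A₁ ∘ A₂ is compact, then V₁ ∩ V₂ is finite-dimensional, V₁ + V₂ is closed of finite codimension in H, and dim(V₁ ∩ V₂) = codim(V₁ + V₂). -/

import Mathlib

set_option linter.unusedSectionVars false
open Module Metric Set Filter Topology

variable {H : Type*} [NormedAddCommGroup H] [InnerProductSpace ℂ H] [CompleteSpace H]

theorem compact_subseq {K : H →L[ℂ] H} (hK : IsCompactOperator ⇑K)
    (u : ℕ → H) (C : ℝ) (hu : ∀ n, ‖u n‖ ≤ C) :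
    ∃ (φ : ℕ → ℕ), StrictMono φ ∧ ∃ z, Tendsto (fun n => K (u (φ n))) atTop (𝓝 z) := by
  have hcpt : IsCompact (closure (⇑K '' closedBall 0 C)) :=
    hK.isCompact_closure_image_closedBall C
  have hmem : ∀ n, K (u n) ∈ closure (⇑K '' closedBall 0 C) := fun n =>
    subset_closure ⟨u n, by simpa [mem_closedBall, dist_eq_norm] using hu n, rfl⟩
  obtain ⟨z, _, φ, hφ, hz⟩ := hcpt.tendsto_subseq (fun n => hmem n)
  exact ⟨φ, hφ, z, hz⟩

/-- `1 - K` is bounded below on the orthogonal complement of its kernel. -/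
theorem one_sub_bounded_below {K : H →L[ℂ] H} (hK : IsCompactOperator ⇑K) :
    ∃ c : ℝ, 0 < c ∧ ∀ x ∈ (LinearMap.ker ((1 - K : H →L[ℂ] H) : H →ₗ[ℂ] H))ᗮ, c * ‖x‖ ≤ ‖(1 - K) x‖ := by
  set T := 1 - K with hT
  set N := LinearMap.ker (T : H →ₗ[ℂ] H)
  by_contra hc
  push_neg at hc
  -- produce unit vectors uₙ ∈ Nᗮ with ‖T uₙ‖ < 1/(n+1)
  have key : ∀ n : ℕ, ∃ u : H, u ∈ Nᗮ ∧ ‖u‖ = 1 ∧ ‖T u‖ < (n+1:ℝ)⁻¹ := by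
    intro n
    obtain ⟨x, hxN, hx⟩ := hc ((n+1:ℝ)⁻¹) (by positivity)
    have hx0 : x ≠ 0 := by
      rintro rfl; simp at hx
    refine ⟨(‖x‖:ℂ)⁻¹ • x, Nᗮ.smul_mem _ hxN, ?_, ?_⟩
    · rw [norm_smul]
      simp [inv_mul_cancel₀ (norm_ne_zero_iff.2 hx0)]
    · rw [map_smul, norm_smul]
      simp only [norm_inv, Complex.norm_real, norm_norm]
      rw [inv_mul_lt_iff₀ (norm_pos_iff.2 hx0)]
      calc ‖T x‖ < (n+1:ℝ)⁻¹ * ‖x‖ := hx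
        _ = ‖x‖ * (n+1:ℝ)⁻¹ := by ring
  choose u huN hunorm huT using key
  obtain ⟨φ, hφ, z, hz⟩ := compact_subseq hK u 1 (fun n => (hunorm n).le)
  have hTu : Tendsto (fun n => T (u (φ n))) atTop (𝓝 0) := by
    have : Tendsto (fun n : ℕ => ((n:ℝ)+1)⁻¹) atTop (𝓝 0) := tendsto_one_div_add_atTop_nhds_zero_nat.congr (by intro n; rw [one_div])
    refine squeeze_zero_norm (fun n => ?_) (this.comp hφ.tendsto_atTop)
    exact (huT (φ n)).le
  have huz : Tendsto (fun n => u (φ n)) atTop (𝓝 z) := by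
    have : ∀ n, u (φ n) = T (u (φ n)) + K (u (φ n)) := by
      intro n; simp [hT, ContinuousLinearMap.sub_apply]
    rw [show z = 0 + z by simp]
    exact Tendsto.congr (fun n => (this n).symm) (hTu.add hz)
  have hzNp : z ∈ Nᗮ := by
    have : IsClosed (Nᗮ : Set H) := N.isClosed_orthogonal
    exact this.mem_of_tendsto huz (Eventually.of_forall fun n => huN (φ n))
  have hznorm : ‖z‖ = 1 := by
    have h1 : Tendsto (fun n => ‖u (φ n)‖) atTop (𝓝 1) := by
      simp only [hunorm]; exact tendsto_const_nhds
    exact tendsto_nhds_unique (huz.norm) h1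
  have hTz : T z = 0 :=
    tendsto_nhds_unique ((T.continuous.tendsto z).comp huz) hTu
  have hzN : z ∈ N := LinearMap.mem_ker.2 hTz
  have : z = 0 := by
    have := Submodule.inner_right_of_mem_orthogonal hzN hzNp
    simpa [inner_self_eq_zero] using this
  rw [this] at hznorm; simp at hznorm

/-- The range of `1 - K` is closed for compact `K`. -/
theorem range_one_sub_isClosed {K : H →L[ℂ] H} (hK : IsCompactOperator ⇑K) :
    IsClosed ((LinearMap.range ((1 - K : H →L[ℂ] H) : H →ₗ[ℂ] H) : Submodule ℂ H) : Set H) := by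
  set T : H →L[ℂ] H := 1 - K with hT
  set N := LinearMap.ker (T : H →ₗ[ℂ] H) with hN
  haveI : CompleteSpace N := (ContinuousLinearMap.isClosed_ker T).completeSpace_coe
  haveI : CompleteSpace ↥Nᗮ := (N.isClosed_orthogonal).completeSpace_coe
  obtain ⟨c, hc, hbound⟩ := one_sub_bounded_below hK
  set T' : ↥Nᗮ →L[ℂ] H := T.comp Nᗮ.subtypeL with hT'
  have hanti : AntilipschitzWith (⟨c⁻¹, by positivity⟩ : NNReal) ⇑T' := by
    apply ContinuousLinearMap.antilipschitz_of_bound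
    intro y
    have := hbound y y.2
    rw [hT', ContinuousLinearMap.comp_apply]
    push_cast
    calc ‖y‖ = c⁻¹ * (c * ‖y‖) := by field_simp
      _ ≤ c⁻¹ * ‖T (Nᗮ.subtypeL y)‖ := by
          apply mul_le_mul_of_nonneg_left _ (by positivity)
          exact hbound y y.2
  have hcl : IsClosed (Set.range ⇑T') := hanti.isClosed_range T'.uniformContinuous
  have hEq : ((LinearMap.range (T : H →ₗ[ℂ] H) : Submodule ℂ H) : Set H) = Set.range ⇑T' := by
    ext x
    constructor
    · rintro ⟨w, rfl⟩
      have hsup : N ⊔ Nᗮ = ⊤ := Submodule.sup_orthogonal_of_hasOrthogonalProjection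
      have : w ∈ N ⊔ Nᗮ := hsup.symm ▸ Submodule.mem_top
      obtain ⟨a, ha, b, hb, rfl⟩ := Submodule.mem_sup.1 this
      refine ⟨⟨b, hb⟩, ?_⟩
      have haz : T a = 0 := LinearMap.mem_ker.1 ha
      simp [hT', ContinuousLinearMap.comp_apply, map_add, haz]
    · rintro ⟨y, rfl⟩
      exact ⟨Nᗮ.subtypeL y, rfl⟩
  rw [hEq]; exact hcl

/-- The kernel of `1 - K` is finite dimensional for compact `K`. -/
theorem ker_one_sub_finiteDimensional {K : H →L[ℂ] H} (hK : IsCompactOperator ⇑K) :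
    FiniteDimensional ℂ (LinearMap.ker ((1 - K : H →L[ℂ] H) : H →ₗ[ℂ] H)) := by
  set N := LinearMap.ker ((1 - K : H →L[ℂ] H) : H →ₗ[ℂ] H)
  have hS : IsCompact ((N : Set H) ∩ closedBall 0 1) := by
    have hsub : (N : Set H) ∩ closedBall 0 1 ⊆ closure (⇑K '' closedBall 0 1) := by
      rintro x ⟨hx, hxb⟩
      have : K x = x := by
        have h2 : x - K x = 0 := by simpa using (LinearMap.mem_ker).1 hx
        exact (sub_eq_zero.1 h2).symm
      exact subset_closure ⟨x, hxb, this⟩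
    have hclosed : IsClosed ((N : Set H) ∩ closedBall 0 1) :=
      (ContinuousLinearMap.isClosed_ker (1 - K)).inter isClosed_closedBall
    exact (hK.isCompact_closure_image_closedBall 1).of_isClosed_subset hclosed hsub
  apply FiniteDimensional.of_isCompact_closedBall₀ ℂ (one_pos)
  have : IsCompact ((↑) '' (closedBall (0 : N) 1) : Set H) := by
    have : ((↑) '' (closedBall (0 : N) 1) : Set H) = (N : Set H) ∩ closedBall 0 1 := by
      ext x
      constructor
      · rintro ⟨y, hy, rfl⟩
        exact ⟨y.2, by simpa [mem_closedBall, dist_eq_norm] using hy⟩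
      · rintro ⟨hx, hxb⟩
        exact ⟨⟨x, hx⟩, by simpa [mem_closedBall, dist_eq_norm] using hxb, rfl⟩
    rw [this]; exact hS
  exact (Topology.IsEmbedding.subtypeVal.isCompact_iff).2 this

theorem one_sub_pow_compact {K : H →L[ℂ] H} (hK : IsCompactOperator ⇑K) (n : ℕ) :
    IsCompactOperator ⇑(1 - ((1 - K) ^ n)) := by
  induction n with
  | zero => simpa using isCompactOperator_zero
  | succ n ih =>
    have heq : 1 - (1 - K) ^ (n + 1) = (1 - (1 - K) ^ n) + ((1 - K) ^ n) * K := by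
      rw [pow_succ, mul_sub, mul_one]; abel
    rw [heq]
    have h2 : IsCompactOperator ⇑(((1 - K) ^ n) * K) := by
      have : ⇑(((1 - K) ^ n) * K) = ⇑((1 - K) ^ n) ∘ ⇑K := rfl
      rw [this]
      exact hK.continuous_comp ((1 - K) ^ n).continuous
    have h3 := ih.add h2
    have : ⇑((1 - (1 - K) ^ n) + ((1 - K) ^ n) * K) =
        (⇑(1 - (1 - K) ^ n) + ⇑(((1 - K) ^ n) * K)) := by
      ext x; simp [ContinuousLinearMap.add_apply]
    rwa [this]

theorem range_pow_isClosed {K : H →L[ℂ] H} (hK : IsCompactOperator ⇑K) (n : ℕ) :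
    IsClosed ((LinearMap.range (((1 - K) ^ n : H →L[ℂ] H) : H →ₗ[ℂ] H) : Submodule ℂ H) : Set H) := by
  have h := range_one_sub_isClosed (one_sub_pow_compact hK n)
  have heq : (1 : H →L[ℂ] H) - (1 - (1 - K) ^ n) = (1 - K) ^ n := by abel
  rwa [heq] at h

/-- If `x` is orthogonal to `S` and `w ∈ S`, then `‖x‖ ≤ ‖x - w‖`. -/
theorem norm_le_of_orthogonal {S : Submodule ℂ H} {x w : H} (hx : x ∈ Sᗮ) (hw : w ∈ S) :
    ‖x‖ ≤ ‖x - w‖ := by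
  have hinner : (inner ℂ x w : ℂ) = 0 := Submodule.inner_left_of_mem_orthogonal hw hx
  have h := @norm_sub_sq ℂ H _ _ _ x w
  rw [hinner] at h
  simp only [map_zero, mul_zero, sub_zero] at h
  nlinarith [norm_nonneg (x - w), norm_nonneg x, norm_nonneg w]

/-- If `1 - K` is injective for compact `K`, it is surjective. -/
theorem surjective_of_injective_one_sub {K : H →L[ℂ] H} (hK : IsCompactOperator ⇑K)
    (hinj : Function.Injective ⇑(1 - K)) : Function.Surjective ⇑(1 - K) := by
  set T : H →L[ℂ] H := 1 - K with hT
  by_contra hsurj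
  obtain ⟨z, hz⟩ := not_forall.1 (fun h => hsurj (fun y => h y))
  have hzr : z ∉ LinearMap.range (T : H →ₗ[ℂ] H) := by
    rintro ⟨w, hw⟩
    exact hz ⟨w, hw⟩
  -- the decreasing chain of closed ranges
  set R : ℕ → Submodule ℂ H := fun n => LinearMap.range ((T ^ n : H →L[ℂ] H) : H →ₗ[ℂ] H) with hR
  have hRclosed : ∀ n, IsClosed ((R n : Submodule ℂ H) : Set H) := fun n => range_pow_isClosed hK n
  have hTinj : ∀ n, Function.Injective ⇑(T ^ n) := by
    intro n
    induction n with
    | zero => simp [Function.Injective]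
    | succ n ih =>
      rw [pow_succ]
      intro a b hab
      rw [ContinuousLinearMap.mul_apply, ContinuousLinearMap.mul_apply] at hab
      exact hinj (ih hab)
  have hTmapsR : ∀ n, ∀ x ∈ R n, T x ∈ R (n+1) := by
    rintro n x ⟨w, rfl⟩
    exact ⟨w, by rw [pow_succ']; rfl⟩
  have hmono : ∀ n, R (n+1) ≤ R n := by
    rintro n x ⟨w, rfl⟩
    exact ⟨T w, by rw [pow_succ]; rfl⟩
  have hstrict : ∀ n, (T ^ n) z ∈ R n ∧ (T ^ n) z ∉ R (n+1) := by
    intro n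
    refine ⟨⟨z, rfl⟩, ?_⟩
    rintro ⟨w, hw⟩
    rw [pow_succ'] at hw
    have h4 : (T ^ n) (T w) = (T ^ n) z := by
      rw [← ContinuousLinearMap.mul_apply, ← pow_succ, pow_succ']
      exact hw
    exact hzr ⟨w, hTinj n h4⟩
  -- choose unit vectors uₙ ∈ R n ∩ (R (n+1))ᗮ
  have key : ∀ n, ∃ u : H, u ∈ R n ∧ u ∈ (R (n+1))ᗮ ∧ ‖u‖ = 1 := by
    intro n
    haveI : CompleteSpace (R (n+1)) := (hRclosed (n+1)).completeSpace_coe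
    have hsup : R (n+1) ⊔ (R (n+1))ᗮ = ⊤ := Submodule.sup_orthogonal_of_hasOrthogonalProjection
    have hmem : (T ^ n) z ∈ R (n+1) ⊔ (R (n+1))ᗮ := hsup.symm ▸ Submodule.mem_top
    obtain ⟨a, ha, b, hb, hab⟩ := Submodule.mem_sup.1 hmem
    have hb0 : b ≠ 0 := by
      rintro rfl
      exact (hstrict n).2 (by rw [← hab, add_zero]; exact ha)
    have hbRn : b ∈ R n := by
      have : b = (T ^ n) z - a := by rw [← hab]; abel
      rw [this]
      exact (R n).sub_mem (hstrict n).1 (hmono n ha)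
    refine ⟨(‖b‖:ℂ)⁻¹ • b, (R n).smul_mem _ hbRn, Submodule.smul_mem _ _ hb,
      by rw [norm_smul]; simp [inv_mul_cancel₀ (norm_ne_zero_iff.2 hb0)]⟩
  choose u huR huO hunorm using key
  -- K u n are 1-separated
  have hsep : ∀ m n, n < m → 1 ≤ ‖K (u n) - K (u m)‖ := by
    intro m n hnm
    have hRle : R m ≤ R (n+1) := by
      induction hnm with
      | refl => exact le_refl _
      | step h ih => exact le_trans (hmono _) ih
    have hKu : ∀ j, K (u j) = u j - T (u j) := by
      intro j; simp [hT, ContinuousLinearMap.sub_apply]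
    have : K (u n) - K (u m) = u n - (T (u n) + u m - T (u m)) := by
      rw [hKu n, hKu m]; abel
    rw [this]
    have hw : T (u n) + u m - T (u m) ∈ R (n+1) := by
      have h1 : T (u n) ∈ R (n+1) := hTmapsR n _ (huR n)
      have h2 : u m ∈ R (n+1) := hRle (huR m)
      have h3 : T (u m) ∈ R (n+1) := hmono (n+1) (hTmapsR (n+1) _ h2)
      exact Submodule.sub_mem _ ((R (n+1)).add_mem h1 h2) h3
    calc (1:ℝ) = ‖u n‖ := (hunorm n).symm
      _ ≤ _ := norm_le_of_orthogonal (huO n) hw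
  -- contradiction with compactness
  obtain ⟨φ, hφ, w, hw⟩ := compact_subseq hK u 1 (fun n => (hunorm n).le)
  have hcauchy := hw.cauchySeq
  rw [Metric.cauchySeq_iff] at hcauchy
  obtain ⟨M, hM⟩ := hcauchy 1 one_pos
  have := hM M le_rfl (M+1) (by omega)
  rw [dist_eq_norm] at this
  exact absurd this (not_lt.2 (hsep (φ (M+1)) (φ M) (hφ (by omega))))

/-- If `1 - K` is surjective for compact `K`, it is injective. -/
theorem injective_of_surjective_one_sub {K : H →L[ℂ] H} (hK : IsCompactOperator ⇑K)
    (hsurj : Function.Surjective ⇑(1 - K)) : Function.Injective ⇑(1 - K) := by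
  set T : H →L[ℂ] H := 1 - K with hT
  by_contra hinj
  -- get a nonzero kernel element
  have hker : ∃ x₀ : H, x₀ ≠ 0 ∧ T x₀ = 0 := by
    rw [Function.not_injective_iff] at hinj
    obtain ⟨a, b, hab, hne⟩ := hinj
    exact ⟨a - b, sub_ne_zero.2 hne, by rw [map_sub, hab, sub_self]⟩
  obtain ⟨x₀, hx0, hTx0⟩ := hker
  -- build a chain of preimages
  have hchain : ∃ x : ℕ → H, x 0 = x₀ ∧ ∀ n, T (x (n+1)) = x n := by
    choose g hg using hsurj
    exact ⟨fun n => Nat.rec x₀ (fun _ xn => g xn) n, rfl, fun n => hg _⟩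
  obtain ⟨x, hx0', hxs⟩ := hchain
  have hxn : ∀ n, (T ^ n) (x n) = x₀ := by
    intro n
    induction n with
    | zero => simpa using hx0'
    | succ n ih =>
      rw [pow_succ, ContinuousLinearMap.mul_apply, hxs n, ih]
  have hxk : ∀ n, (T ^ (n+1)) (x n) = 0 := by
    intro n
    rw [pow_succ', ContinuousLinearMap.mul_apply, hxn n]
    exact hTx0
  set N : ℕ → Submodule ℂ H := fun n => LinearMap.ker ((T ^ n : H →L[ℂ] H) : H →ₗ[ℂ] H) with hN
  have hNclosed : ∀ n, IsClosed ((N n : Submodule ℂ H) : Set H) := fun n =>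
    ContinuousLinearMap.isClosed_ker _
  have hmono : ∀ n, N n ≤ N (n+1) := by
    intro n y hy
    have : (T ^ n) y = 0 := hy
    show (T ^ (n+1)) y = 0
    rw [pow_succ', ContinuousLinearMap.mul_apply, this, map_zero]
  have hTmaps : ∀ n, ∀ y ∈ N (n+1), T y ∈ N n := by
    intro n y hy
    have : (T ^ (n+1)) y = 0 := hy
    show (T ^ n) (T y) = 0
    rw [← ContinuousLinearMap.mul_apply, ← pow_succ]
    exact this
  -- choose unit vectors uₙ ∈ N (n+1) ∩ (N n)ᗮ
  have key : ∀ n, ∃ u : H, u ∈ N (n+1) ∧ u ∈ (N n)ᗮ ∧ ‖u‖ = 1 := by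
    intro n
    haveI : CompleteSpace (N n) := (hNclosed n).completeSpace_coe
    have hsup : N n ⊔ (N n)ᗮ = ⊤ := Submodule.sup_orthogonal_of_hasOrthogonalProjection
    have hmem : x n ∈ N n ⊔ (N n)ᗮ := hsup.symm ▸ Submodule.mem_top
    obtain ⟨a, ha, b, hb, hab⟩ := Submodule.mem_sup.1 hmem
    have hb0 : b ≠ 0 := by
      rintro rfl
      rw [add_zero] at hab
      have : (T ^ n) (x n) = 0 := by rw [← hab]; exact ha
      rw [hxn n] at this
      exact hx0 this
    have hbN : b ∈ N (n+1) := by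
      have hxN : x n ∈ N (n+1) := hxk n
      have : b = x n - a := by rw [← hab]; abel
      rw [this]
      exact Submodule.sub_mem _ hxN (hmono n ha)
    refine ⟨(‖b‖:ℂ)⁻¹ • b, Submodule.smul_mem _ _ hbN, Submodule.smul_mem _ _ hb,
      by rw [norm_smul]; simp [inv_mul_cancel₀ (norm_ne_zero_iff.2 hb0)]⟩
  choose u huN huO hunorm using key
  have hsep : ∀ m n, n < m → 1 ≤ ‖K (u m) - K (u n)‖ := by
    intro m n hnm
    have hNle : N (n+1) ≤ N m := by
      induction hnm with
      | refl => exact le_refl _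
      | step h ih => exact le_trans ih (hmono _)
    have hKu : ∀ j, K (u j) = u j - T (u j) := by
      intro j; simp [hT, ContinuousLinearMap.sub_apply]
    have hdiff : K (u m) - K (u n) = u m - (T (u m) + u n - T (u n)) := by
      rw [hKu m, hKu n]; abel
    rw [hdiff]
    have hw : T (u m) + u n - T (u n) ∈ N m := by
      have h1 : T (u m) ∈ N m := hTmaps m _ (huN m)
      have h2 : u n ∈ N m := hNle (huN n)
      have h3 : T (u n) ∈ N m := hNle (hmono n (hTmaps n _ (huN n)))
      exact Submodule.sub_mem _ (Submodule.add_mem _ h1 h2) h3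
    calc (1:ℝ) = ‖u m‖ := (hunorm m).symm
      _ ≤ _ := norm_le_of_orthogonal (huO m) hw
  obtain ⟨φ, hφ, w, hw⟩ := compact_subseq hK u 1 (fun n => (hunorm n).le)
  have hcauchy := hw.cauchySeq
  rw [Metric.cauchySeq_iff] at hcauchy
  obtain ⟨M, hM⟩ := hcauchy 1 one_pos
  have := hM (M+1) (by omega) M le_rfl
  rw [dist_eq_norm] at this
  exact absurd this (not_lt.2 (hsep (φ (M+1)) (φ M) (hφ (by omega))))

section LinearAlgebra

variable {V W : Type*} [AddCommGroup V] [Module ℂ V] [AddCommGroup W] [Module ℂ W]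

theorem constr_injective [FiniteDimensional ℂ V] {n : ℕ} (b : Basis (Fin n) ℂ V)
    {v : Fin n → W} (hv : LinearIndependent ℂ v) :
    Function.Injective (b.constr ℂ v) := by
  rw [← LinearMap.ker_eq_bot]
  rw [eq_bot_iff]
  intro z hz
  have hz' : ∑ i, b.equivFun z i • v i = 0 := by
    rw [← b.constr_apply_fintype ℂ v z]
    exact hz
  have hall := Fintype.linearIndependent_iff.1 hv (b.equivFun z) hz'
  have : b.equivFun z = 0 := funext hall
  have := b.equivFun.injective (by simpa using this)
  simpa using this

theorem exists_injective_linearMap [FiniteDimensional ℂ V]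
    (h : (Module.finrank ℂ V : Cardinal) ≤ Module.rank ℂ W) :
    ∃ j : V →ₗ[ℂ] W, Function.Injective j := by
  obtain ⟨s, hcard, hli⟩ := le_rank_iff_exists_linearIndependent_finset.1 h
  set n := Module.finrank ℂ V
  have e : Fin n ≃ ↥(s : Set W) := (s.equivFin.trans (finCongr hcard)).symm
  have hv : LinearIndependent ℂ (fun i : Fin n => ((e i : W))) := by
    have := hli.comp e e.injective
    exact this
  exact ⟨(Module.finBasis ℂ V).constr ℂ (fun i : Fin n => ((e i : W))), constr_injective _ hv⟩

theorem exists_surjective_linearMap [FiniteDimensional ℂ V] [FiniteDimensional ℂ W]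
    (h : Module.finrank ℂ W ≤ Module.finrank ℂ V) :
    ∃ j : V →ₗ[ℂ] W, Function.Surjective j := by
  set n := Module.finrank ℂ V
  set m := Module.finrank ℂ W
  set b := Module.finBasis ℂ V
  set c := Module.finBasis ℂ W
  set v : Fin n → W := fun i => if hi : (i : ℕ) < m then c ⟨i, hi⟩ else 0 with hvdef
  refine ⟨b.constr ℂ v, ?_⟩
  rw [← LinearMap.range_eq_top]
  rw [eq_top_iff, ← c.span_eq, Submodule.span_le]
  rintro w ⟨k, rfl⟩
  refine ⟨b ⟨(k : ℕ), lt_of_lt_of_le k.2 h⟩, ?_⟩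
  rw [Basis.constr_basis]
  simp [hvdef]
  exact fun h' => absurd k.2 (not_lt.2 h')

end LinearAlgebra

theorem isCompactOperator_of_finiteDimensional {E : Type*} [NormedAddCommGroup E]
    [NormedSpace ℂ E] [FiniteDimensional ℂ E] (f : E →L[ℂ] H) : IsCompactOperator ⇑f := by
  refine ⟨⇑f '' closedBall 0 1, ?_, ?_⟩
  · exact (isCompact_closedBall 0 1).image f.continuous
  · exact mem_of_superset (closedBall_mem_nhds 0 one_pos) (subset_preimage_image ⇑f _)

/-- Riesz–Schauder: `1 - K` is Fredholm of index zero for compact `K`. -/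
theorem riesz_fredholm {K : H →L[ℂ] H} (hK : IsCompactOperator ⇑K) :
    FiniteDimensional ℂ (LinearMap.ker ((1 - K : H →L[ℂ] H) : H →ₗ[ℂ] H)) ∧
    IsClosed ((LinearMap.range ((1 - K : H →L[ℂ] H) : H →ₗ[ℂ] H) : Submodule ℂ H) : Set H) ∧
    FiniteDimensional ℂ ↥((LinearMap.range ((1 - K : H →L[ℂ] H) : H →ₗ[ℂ] H))ᗮ) ∧
    Module.finrank ℂ (LinearMap.ker ((1 - K : H →L[ℂ] H) : H →ₗ[ℂ] H)) =
      Module.finrank ℂ ↥((LinearMap.range ((1 - K : H →L[ℂ] H) : H →ₗ[ℂ] H))ᗮ) := by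
  set T : H →L[ℂ] H := 1 - K with hT
  set N := LinearMap.ker (T : H →ₗ[ℂ] H) with hN
  set R := LinearMap.range (T : H →ₗ[ℂ] H) with hR
  haveI hNfd : FiniteDimensional ℂ N := ker_one_sub_finiteDimensional hK
  have hRc : IsClosed ((R : Submodule ℂ H) : Set H) := range_one_sub_isClosed hK
  haveI : CompleteSpace N := (ContinuousLinearMap.isClosed_ker T).completeSpace_coe
  haveI : CompleteSpace R := hRc.completeSpace_coe
  set R' := Rᗮ with hR'
  -- the finite rank perturbation attached to a map j : N →ₗ R'
  set F : (↥N →ₗ[ℂ] ↥R') → (H →L[ℂ] H) := fun j =>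
    (R'.subtypeL.comp (LinearMap.toContinuousLinearMap j)).comp (N.orthogonalProjectionOnto) with hF
  have hFdef : ∀ j w, F j w = ((j (N.orthogonalProjectionOnto w) : ↥R') : H) := by
    intro j w
    simp [hF, ContinuousLinearMap.comp_apply]
  have hFR' : ∀ j w, F j w ∈ R' := fun j w => by rw [hFdef]; exact (j _).2
  have hFcompact : ∀ j, IsCompactOperator ⇑(F j) := by
    intro j
    have h1 : IsCompactOperator ⇑(R'.subtypeL.comp (LinearMap.toContinuousLinearMap j)) :=
      isCompactOperator_of_finiteDimensional _
    have := h1.comp_clm (N.orthogonalProjectionOnto)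
    exact this
  have hTF : ∀ j, (1 : H →L[ℂ] H) - (K - F j) = T + F j := by
    intro j; rw [hT]; abel
  have hdisj : ∀ a, a ∈ R → a ∈ R' → a = 0 := by
    intro a h1 h2
    exact (Submodule.mem_bot ℂ).1 ((R.orthogonal_disjoint.eq_bot) ▸ Submodule.mem_inf.2 ⟨h1, h2⟩)
  have hFN : ∀ j (z : ↥N), F j (z : H) = ((j z : ↥R') : H) := by
    intro j z
    rw [hFdef, Submodule.orthogonalProjectionOnto_mem_subspace_eq_self]
  -- Claim 1 : injective j is surjective
  have claim1 : ∀ j : ↥N →ₗ[ℂ] ↥R', Function.Injective j → Function.Surjective j := by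
    intro j hj
    have hinj' : Function.Injective ⇑(T + F j) := by
      intro x y hxy
      have hw : (T + F j) (x - y) = 0 := by
        rw [map_sub, sub_eq_zero]; exact hxy
      rw [ContinuousLinearMap.add_apply] at hw
      set w := x - y
      have hTw : T w ∈ R := ⟨w, rfl⟩
      have hTw' : T w ∈ R' := by
        rw [eq_neg_of_add_eq_zero_left hw]
        exact R'.neg_mem (hFR' j w)
      have hTw0 : T w = 0 := hdisj _ hTw hTw'
      have hFw0 : F j w = 0 := by
        rw [eq_neg_of_add_eq_zero_right hw, hTw0, neg_zero]
      have hwN : w ∈ N := LinearMap.mem_ker.2 hTw0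
      have : ((j ⟨w, hwN⟩ : ↥R') : H) = 0 := by rw [← hFN j ⟨w, hwN⟩]; exact hFw0
      have hz : j ⟨w, hwN⟩ = 0 := by exact_mod_cast this
      have : (⟨w, hwN⟩ : ↥N) = 0 := hj (by rw [hz, map_zero])
      have hw0 : w = 0 := by simpa using congrArg Subtype.val this
      exact sub_eq_zero.1 hw0
    have hsurj' : Function.Surjective ⇑(T + F j) := by
      have := surjective_of_injective_one_sub (hK.sub (hFcompact j))
        (by rw [show ⇑((1 : H →L[ℂ] H) - (K - F j)) = ⇑(T + F j) from congrArg _ (hTF j)]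
            exact hinj')
      rwa [show ⇑((1 : H →L[ℂ] H) - (K - F j)) = ⇑(T + F j) from congrArg _ (hTF j)] at this
    intro y
    obtain ⟨w, hw⟩ := hsurj' (y : H)
    rw [ContinuousLinearMap.add_apply] at hw
    have h1 : (y : H) - F j w = T w := by rw [← hw]; exact add_sub_cancel_right _ _
    have h2 : (y : H) - F j w ∈ R' := R'.sub_mem y.2 (hFR' j w)
    have h3 : (y : H) - F j w = 0 := hdisj _ (h1 ▸ ⟨w, rfl⟩) h2
    refine ⟨N.orthogonalProjectionOnto w, ?_⟩
    have : ((j (N.orthogonalProjectionOnto w) : ↥R') : H) = (y : H) := by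
      rw [← hFdef]
      have := sub_eq_zero.1 h3
      exact this.symm
    exact Subtype.ext this
  -- Claim 2 : surjective j is injective
  have claim2 : ∀ j : ↥N →ₗ[ℂ] ↥R', Function.Surjective j → Function.Injective j := by
    intro j hj
    have hsurj' : Function.Surjective ⇑(T + F j) := by
      intro u
      have hsup : R ⊔ R' = ⊤ := Submodule.sup_orthogonal_of_hasOrthogonalProjection
      have humem : u ∈ R ⊔ R' := hsup.symm ▸ Submodule.mem_top
      obtain ⟨r, hr, s, hs, rfl⟩ := Submodule.mem_sup.1 humem
      obtain ⟨xr, hxr⟩ := hr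
      obtain ⟨z, hz⟩ := hj ⟨s, hs⟩
      set x' := xr - ((N.orthogonalProjectionOnto xr : ↥N) : H) with hx'
      have hx'o : x' ∈ Nᗮ := N.sub_starProjection_mem_orthogonal xr
      refine ⟨x' + (z : H), ?_⟩
      rw [ContinuousLinearMap.add_apply, map_add, map_add]
      have e1 : T x' = r := by
        rw [hx', map_sub]
        have : T ((N.orthogonalProjectionOnto xr : ↥N) : H) = 0 :=
          LinearMap.mem_ker.1 (N.orthogonalProjectionOnto xr).2
        rw [this, sub_zero]; exact hxr
      have e2 : T (z : H) = 0 := LinearMap.mem_ker.1 z.2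
      have e3 : F j x' = 0 := by
        rw [hFdef, Submodule.orthogonalProjectionOnto_apply_of_mem_orthogonal hx'o]
        simp
      have e4 : F j (z : H) = s := by rw [hFN j z, hz]
      rw [e1, e2, e3, e4]; abel
    have hinj' : Function.Injective ⇑(T + F j) := by
      have := injective_of_surjective_one_sub (hK.sub (hFcompact j))
        (by rw [show ⇑((1 : H →L[ℂ] H) - (K - F j)) = ⇑(T + F j) from congrArg _ (hTF j)]
            exact hsurj')
      rwa [show ⇑((1 : H →L[ℂ] H) - (K - F j)) = ⇑(T + F j) from congrArg _ (hTF j)] at this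
    intro a b hab
    have : j (a - b) = 0 := by rw [map_sub, hab, sub_self]
    have h0 : (T + F j) ((a - b : ↥N) : H) = 0 := by
      rw [ContinuousLinearMap.add_apply]
      have e2 : T ((a - b : ↥N) : H) = 0 := LinearMap.mem_ker.1 (a - b).2
      rw [e2, hFN j (a - b), this, zero_add]
      simp
    have : ((a - b : ↥N) : H) = 0 :=
      hinj' (show (T + F j) ((a - b : ↥N) : H) = (T + F j) 0 by rw [h0, map_zero])
    have : (a - b : ↥N) = 0 := by exact_mod_cast this
    exact sub_eq_zero.1 this
  -- R' is finite dimensional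
  haveI hR'fd : FiniteDimensional ℂ ↥R' := by
    by_contra hfd
    have haleph : Cardinal.aleph0 ≤ Module.rank ℂ ↥R' := by
      by_contra hlt
      push_neg at hlt
      exact hfd (Module.rank_lt_aleph0_iff.1 hlt)
    have hrank : (Module.finrank ℂ ↥N : Cardinal) ≤ Module.rank ℂ ↥R' :=
      le_trans (le_of_lt (Cardinal.nat_lt_aleph0 _)) haleph
    obtain ⟨j, hjinj⟩ := exists_injective_linearMap hrank
    exact hfd (Module.Finite.of_surjective j (claim1 j hjinj))
  refine ⟨hNfd, hRc, hR'fd, le_antisymm ?_ ?_⟩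
  · -- n ≤ m
    by_contra hlt
    push_neg at hlt
    obtain ⟨j, hjsurj⟩ := exists_surjective_linearMap hlt.le
    have hjinj := claim2 j hjsurj
    exact absurd (LinearMap.finrank_le_finrank_of_injective hjinj) (not_le.2 hlt)
  · -- m ≤ n
    by_contra hlt
    push_neg at hlt
    have hrank : (Module.finrank ℂ ↥N : Cardinal) ≤ Module.rank ℂ ↥R' := by
      rw [← Module.finrank_eq_rank]
      exact_mod_cast hlt.le
    obtain ⟨j, hjinj⟩ := exists_injective_linearMap hrank
    have hjsurj := claim1 j hjinj
    have : Module.finrank ℂ ↥R' ≤ Module.finrank ℂ ↥N := by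
      have h1 := LinearMap.finrank_range_le j
      rw [LinearMap.range_eq_top.2 hjsurj] at h1
      simpa using h1
    exact absurd this (not_le.2 hlt)


/-- For bounded operators `A₁ : H₁ →L H₂`, `A₂ : H₂ →L H₁` with
`A₁ ∘ A₂` compact, the graph `V₁` of `A₁` and the swapped graph `V₂` of `A₂`
satisfy the strong Riemann–Roch theorem with index 0: `V₁ ∩ V₂` is
finite-dimensional, `V₁ + V₂` is closed of finite codimension, and
`dim (V₁ ∩ V₂) = codim (V₁ + V₂)`. -/
theorem stmt3
    {H₁ H₂ : Type}
    [NormedAddCommGroup H₁] [InnerProductSpace ℂ H₁] [CompleteSpace H₁]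
    [NormedAddCommGroup H₂] [InnerProductSpace ℂ H₂] [CompleteSpace H₂]
    (A₁ : H₁ →L[ℂ] H₂) (A₂ : H₂ →L[ℂ] H₁)
    (hcompact : IsCompactOperator (A₁ ∘ A₂))
    (V₁ V₂ : Submodule ℂ (H₁ × H₂))
    (hV₁ : (V₁ : Set (H₁ × H₂)) = {p : H₁ × H₂ | p.2 = A₁ p.1})
    (hV₂ : (V₂ : Set (H₁ × H₂)) = {p : H₁ × H₂ | p.1 = A₂ p.2}) :
    FiniteDimensional ℂ ↥(V₁ ⊓ V₂) ∧
    IsClosed ((V₁ ⊔ V₂ : Submodule ℂ (H₁ × H₂)) : Set (H₁ × H₂)) ∧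
    FiniteDimensional ℂ ((H₁ × H₂) ⧸ (V₁ ⊔ V₂)) ∧
    Module.finrank ℂ ↥(V₁ ⊓ V₂) = Module.finrank ℂ ((H₁ × H₂) ⧸ (V₁ ⊔ V₂)) := by
  classical
  set K : H₂ →L[ℂ] H₂ := A₁.comp A₂ with hKdef
  have hKc : IsCompactOperator ⇑K := hcompact
  obtain ⟨hNfd, hRc, hR'fd, hfr⟩ := riesz_fredholm hKc
  set T : H₂ →L[ℂ] H₂ := 1 - K with hTdef
  set N := LinearMap.ker (T : H₂ →ₗ[ℂ] H₂) with hNdef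
  set R := LinearMap.range (T : H₂ →ₗ[ℂ] H₂) with hRdef
  have hTapp : ∀ y : H₂, T y = y - A₁ (A₂ y) := by
    intro y; simp [hTdef, ContinuousLinearMap.sub_apply, hKdef]
  have m₁ : ∀ p : H₁ × H₂, p ∈ V₁ ↔ p.2 = A₁ p.1 := by
    intro p; rw [← SetLike.mem_coe, hV₁]; rfl
  have m₂ : ∀ p : H₁ × H₂, p ∈ V₂ ↔ p.1 = A₂ p.2 := by
    intro p; rw [← SetLike.mem_coe, hV₂]; rfl
  -- the intersection is equivalent to ker T
  have he₁ : Nonempty (↥(V₁ ⊓ V₂) ≃ₗ[ℂ] ↥N) := by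
    refine ⟨{ toFun := fun p => ⟨(p : H₁ × H₂).2, ?_⟩
              map_add' := fun p q => rfl
              map_smul' := fun c p => rfl
              invFun := fun y => ⟨(A₂ (y : H₂), (y : H₂)), ?_⟩
              left_inv := ?_
              right_inv := fun y => rfl }⟩
    · obtain ⟨h1, h2⟩ := Submodule.mem_inf.1 p.2
      have hy := (m₁ _).1 h1
      have hx := (m₂ _).1 h2
      have : T (p : H₁ × H₂).2 = 0 := by
        rw [hTapp, ← hx, ← hy, sub_self]
      exact LinearMap.mem_ker.2 this
    · have hy : T (y : H₂) = 0 := LinearMap.mem_ker.1 y.2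
      rw [hTapp] at hy
      refine Submodule.mem_inf.2 ⟨(m₁ _).2 ?_, (m₂ _).2 rfl⟩
      show (y : H₂) = A₁ (A₂ (y : H₂))
      exact sub_eq_zero.1 hy
    · intro p
      apply Subtype.ext
      obtain ⟨h1, h2⟩ := Submodule.mem_inf.1 p.2
      have hx := (m₂ _).1 h2
      exact Prod.ext hx.symm rfl
  -- the sum is the preimage of R under Φ
  set Φ : (H₁ × H₂) →L[ℂ] H₂ :=
    (ContinuousLinearMap.snd ℂ H₁ H₂) - A₁.comp (ContinuousLinearMap.fst ℂ H₁ H₂) with hΦdef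
  have hΦapp : ∀ p : H₁ × H₂, Φ p = p.2 - A₁ p.1 := fun p => rfl
  have hWeq : V₁ ⊔ V₂ = Submodule.comap (Φ : (H₁ × H₂) →ₗ[ℂ] H₂) R := by
    apply le_antisymm
    · apply sup_le
      · intro p hp
        have hy := (m₁ _).1 hp
        show Φ p ∈ R
        rw [hΦapp, hy, sub_self]
        exact R.zero_mem
      · intro p hp
        have hx := (m₂ _).1 hp
        show Φ p ∈ R
        rw [hΦapp]
        refine ⟨p.2, ?_⟩
        rw [ContinuousLinearMap.coe_coe, hTapp, ← hx]
    · intro p hp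
      obtain ⟨y, hy⟩ : ∃ y, T y = Φ p := hp
      rw [hTapp, hΦapp] at hy
      -- p = (p.1 - A₂ y, A₁ (p.1 - A₂ y)) + (A₂ y + (A₂ (p.2 - A₁ p.1 - (y - A₁ (A₂ y))))... 
      -- simpler: p = (x, A₁ x) + (A₂ y', y') with x := p.1 - A₂ y, y' := p.2 - A₁ x
      set x := p.1 - A₂ y with hxdef
      set y' := p.2 - A₁ x with hy'def
      have hmem1 : (x, A₁ x) ∈ V₁ := (m₁ _).2 rfl
      have hmem2 : (A₂ y', y') ∈ V₂ := (m₂ _).2 rfl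
      have hsum : (x, A₁ x) + (A₂ y', y') = p := by
        have e1 : A₂ y' = A₂ y := by
          rw [hy'def, hxdef]
          have : p.2 - A₁ (p.1 - A₂ y) = y := by
            rw [map_sub]
            have := sub_eq_iff_eq_add.1 hy
            -- hy : y - A₁ (A₂ y) = p.2 - A₁ p.1
            have h2 : p.2 - (A₁ p.1 - A₁ (A₂ y)) = y := by
              rw [sub_sub_eq_add_sub, ← sub_add_eq_add_sub, ← hy]
              abel
            exact h2
          rw [this]
        apply Prod.ext
        · show x + A₂ y' = p.1
          rw [e1, hxdef]; abel
        · show A₁ x + y' = p.2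
          rw [hy'def]; abel
      rw [← hsum]
      exact Submodule.add_mem_sup hmem1 hmem2
  have hWset : ((V₁ ⊔ V₂ : Submodule ℂ (H₁ × H₂)) : Set (H₁ × H₂)) = ⇑Φ ⁻¹' (R : Set H₂) := by
    rw [hWeq]; rfl
  have hWclosed : IsClosed ((V₁ ⊔ V₂ : Submodule ℂ (H₁ × H₂)) : Set (H₁ × H₂)) := by
    rw [hWset]
    exact hRc.preimage Φ.continuous
  -- quotient equivalences
  have hΦsurj : Function.Surjective (Φ : (H₁ × H₂) →ₗ[ℂ] H₂) := by
    intro v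
    exact ⟨(0, v), by show Φ (0, v) = v; rw [hΦapp]; simp⟩
  have hfsurj : Function.Surjective (R.mkQ.comp (Φ : (H₁ × H₂) →ₗ[ℂ] H₂)) :=
    (Submodule.mkQ_surjective R).comp hΦsurj
  have hkerf : V₁ ⊔ V₂ = LinearMap.ker (R.mkQ.comp (Φ : (H₁ × H₂) →ₗ[ℂ] H₂)) := by
    rw [LinearMap.ker_comp, Submodule.ker_mkQ, hWeq]
  have he₂ : Nonempty (((H₁ × H₂) ⧸ (V₁ ⊔ V₂)) ≃ₗ[ℂ] (H₂ ⧸ R)) :=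
    ⟨(Submodule.quotEquivOfEq _ _ hkerf).trans
      ((R.mkQ.comp (Φ : (H₁ × H₂) →ₗ[ℂ] H₂)).quotKerEquivOfSurjective hfsurj)⟩
  -- H₂ ⧸ R ≃ Rᗮ
  haveI : CompleteSpace R := hRc.completeSpace_coe
  have he₃ : Nonempty ((H₂ ⧸ R) ≃ₗ[ℂ] ↥Rᗮ) := by
    have hg : Function.Bijective (R.mkQ.comp Rᗮ.subtype) := by
      constructor
      · intro a b hab
        have : ((a : H₂) - b) ∈ R := by
          rw [← Submodule.Quotient.eq]
          exact hab
        have h2 : ((a : H₂) - b) ∈ Rᗮ := Rᗮ.sub_mem a.2 b.2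
        have h3 : ((a : H₂) - b) = 0 := by
          have := R.orthogonal_disjoint.eq_bot
          exact (Submodule.mem_bot ℂ).1 (this ▸ Submodule.mem_inf.2 ⟨‹_›, h2⟩)
        exact Subtype.ext (sub_eq_zero.1 h3)
      · intro q
        obtain ⟨u, rfl⟩ := Submodule.mkQ_surjective R q
        have hsup : R ⊔ Rᗮ = ⊤ := Submodule.sup_orthogonal_of_hasOrthogonalProjection
        have : u ∈ R ⊔ Rᗮ := hsup.symm ▸ Submodule.mem_top
        obtain ⟨r, hr, s, hs, rfl⟩ := Submodule.mem_sup.1 this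
        refine ⟨⟨s, hs⟩, ?_⟩
        show R.mkQ s = R.mkQ (r + s)
        rw [map_add]
        have : R.mkQ r = 0 := (Submodule.Quotient.mk_eq_zero R).2 hr
        rw [this, zero_add]
    exact ⟨(LinearEquiv.ofBijective (R.mkQ.comp Rᗮ.subtype) hg).symm⟩
  obtain ⟨e₁⟩ := he₁
  obtain ⟨e₂⟩ := he₂
  obtain ⟨e₃⟩ := he₃
  haveI fd1 : FiniteDimensional ℂ ↥(V₁ ⊓ V₂) := Module.Finite.equiv e₁.symm
  haveI fd2 : FiniteDimensional ℂ ((H₁ × H₂) ⧸ (V₁ ⊔ V₂)) :=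
    Module.Finite.equiv (e₂.trans e₃).symm
  refine ⟨fd1, hWclosed, fd2, ?_⟩
  rw [e₁.finrank_eq, (e₂.trans e₃).finrank_eq]
  exact hfr
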